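/- For the forward Euler–Maruyama oscillator recursion with λ ≥ 1 and step size 0 < τ < 1, the expected energy satisfies E_n ≥ exp(τ² n / 2) · E_0 for all n ≥ 0. -/

import Mathlib

open MeasureTheory ProbabilityTheory

lemma my_integrable_mul {Ω : Type*} [MeasureSpace Ω] [IsProbabilityMeasure (ℙ : Measure Ω)]
    {f g : Ω → ℝ} (hf : MemLp f 2 ℙ) (hg : MemLp g 2 ℙ) :
    Integrable (fun ω => f ω * g ω) ℙ := by
  have hb : Integrable (fun ω => (1/2 : ℝ) * (f ω ^ 2 + g ω ^ 2)) ℙ :=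
    (hf.integrable_sq.add hg.integrable_sq).const_mul _
  refine Integrable.mono' hb
    (hf.aestronglyMeasurable.mul hg.aestronglyMeasurable) (Filter.Eventually.of_forall fun ω => ?_)
  rw [Real.norm_eq_abs, abs_mul]
  nlinarith [sq_abs (f ω), sq_abs (g ω), sq_nonneg (|f ω| - |g ω|)]

lemma my_sq_integral {Ω : Type*} [MeasureSpace Ω] [IsProbabilityMeasure (ℙ : Measure Ω)]
    {f g : Ω → ℝ} (hf : MemLp f 2 ℙ) (hg : MemLp g 2 ℙ) (c1 c2 : ℝ) :
    ∫ ω, (c1 * f ω + c2 * g ω) ^ 2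
      = c1 ^ 2 * (∫ ω, f ω ^ 2) + (2 * c1 * c2) * (∫ ω, f ω * g ω) + c2 ^ 2 * (∫ ω, g ω ^ 2) := by
  have h : (fun ω => (c1 * f ω + c2 * g ω) ^ 2)
      = fun ω => (c1 ^ 2 * f ω ^ 2 + (2 * c1 * c2) * (f ω * g ω)) + c2 ^ 2 * g ω ^ 2 := by
    funext ω; ring
  have i1 : Integrable (fun ω => c1 ^ 2 * f ω ^ 2) ℙ := hf.integrable_sq.const_mul _
  have i2 : Integrable (fun ω => (2 * c1 * c2) * (f ω * g ω)) ℙ :=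
    (my_integrable_mul hf hg).const_mul _
  have i3 : Integrable (fun ω => c2 ^ 2 * g ω ^ 2) ℙ := hg.integrable_sq.const_mul _
  have i12 : Integrable (fun ω => c1 ^ 2 * f ω ^ 2 + (2 * c1 * c2) * (f ω * g ω)) ℙ := i1.add i2
  rw [h, integral_add i12 i3, integral_add i1 i2, integral_const_mul, integral_const_mul,
    integral_const_mul]

theorem forward_EM_energy_exponential_growth
    {Ω : Type*} [MeasureSpace Ω] [IsProbabilityMeasure (ℙ : Measure Ω)]
    (lam τ : ℝ) (hlam : 1 ≤ lam) (hτ0 : 0 < τ) (hτ1 : τ < 1)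
    (u v ΔL : ℕ → Ω → ℝ)
    (hu : ∀ n, MemLp (u n) 2 ℙ) (hv : ∀ n, MemLp (v n) 2 ℙ)
    (hL : ∀ n, MemLp (ΔL n) 2 ℙ)
    (hLmean : ∀ n, ∫ ω, ΔL n ω = 0)
    (hindep : ∀ n, IndepFun (fun ω => (u n ω, v n ω)) (ΔL n) ℙ)
    (hrecu : ∀ n ω, u (n + 1) ω = u n ω + τ * v n ω)
    (hrecv : ∀ n ω, v (n + 1) ω = v n ω - τ * lam * u n ω + ΔL n ω)
    (E : ℕ → ℝ)
    (hE : ∀ n, E n = (1 / 2) * ∫ ω, ((v n ω) ^ 2 + lam * (u n ω) ^ 2)) :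
    ∀ n, E n ≥ Real.exp (τ ^ 2 * n / 2) * E 0 := by
  have hlam0 : (0:ℝ) < lam := lt_of_lt_of_le one_pos hlam
  -- split E into two integrals
  have hsplit : ∀ m, E m = (1/2) * ((∫ ω, v m ω ^ 2) + lam * ∫ ω, u m ω ^ 2) := by
    intro m
    rw [hE m, integral_add (hv m).integrable_sq ((hu m).integrable_sq.const_mul lam),
      integral_const_mul]
  have hEnonneg : ∀ m, 0 ≤ E m := by
    intro m
    rw [hsplit m]
    have h1 : 0 ≤ ∫ ω, v m ω ^ 2 := integral_nonneg fun ω => sq_nonneg _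
    have h2 : 0 ≤ ∫ ω, u m ω ^ 2 := integral_nonneg fun ω => sq_nonneg _
    positivity
  -- key one-step inequality
  have key : ∀ n, (1 + τ^2) * E n ≤ E (n+1) := by
    intro n
    set W : Ω → ℝ := fun ω => (-(τ*lam)) * u n ω + 1 * v n ω with hWdef
    have hW : MemLp W 2 ℙ := ((hu n).const_mul _).add ((hv n).const_mul _)
    have hWsq : ∫ ω, W ω ^ 2
        = (-(τ*lam))^2 * (∫ ω, u n ω ^ 2) + (2 * (-(τ*lam)) * 1) * (∫ ω, u n ω * v n ω)
          + 1^2 * (∫ ω, v n ω ^ 2) := my_sq_integral (hu n) (hv n) _ _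
    have hWL : IndepFun W (ΔL n) ℙ := by
      have hφ : Measurable (fun p : ℝ × ℝ => (-(τ*lam)) * p.1 + 1 * p.2) := by fun_prop
      exact (hindep n).comp hφ measurable_id
    have hWLint : ∫ ω, W ω * ΔL n ω = 0 := by
      have h := hWL.integral_mul_eq_mul_integral hW.aestronglyMeasurable
        (hL n).aestronglyMeasurable
      have h2 : (∫ ω, W ω) * (∫ ω, ΔL n ω) = 0 := by rw [hLmean n, mul_zero]
      exact h.trans h2
    have hv1 : ∫ ω, v (n+1) ω ^ 2 = ∫ ω, (1 * W ω + 1 * ΔL n ω) ^ 2 := by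
      have hfun : (fun ω => v (n+1) ω ^ 2) = fun ω => (1 * W ω + 1 * ΔL n ω) ^ 2 := by
        funext ω; simp only [hWdef]; rw [hrecv n ω]; ring
      rw [hfun]
    have hu1 : ∫ ω, u (n+1) ω ^ 2 = ∫ ω, (1 * u n ω + τ * v n ω) ^ 2 := by
      have hfun : (fun ω => u (n+1) ω ^ 2) = fun ω => (1 * u n ω + τ * v n ω) ^ 2 := by
        funext ω; rw [hrecu n ω]; ring
      rw [hfun]
    have hv1' : ∫ ω, v (n+1) ω ^ 2
        = 1^2 * (∫ ω, W ω ^ 2) + (2*1*1) * (∫ ω, W ω * ΔL n ω) + 1^2 * ∫ ω, (ΔL n ω) ^ 2 := by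
      rw [hv1]; exact my_sq_integral hW (hL n) 1 1
    have hu1' : ∫ ω, u (n+1) ω ^ 2
        = 1^2 * (∫ ω, u n ω ^ 2) + (2*1*τ) * (∫ ω, u n ω * v n ω) + τ^2 * ∫ ω, v n ω ^ 2 := by
      rw [hu1]; exact my_sq_integral (hu n) (hv n) 1 τ
    have hA : 0 ≤ ∫ ω, u n ω ^ 2 := integral_nonneg fun ω => sq_nonneg _
    have hB : 0 ≤ ∫ ω, v n ω ^ 2 := integral_nonneg fun ω => sq_nonneg _
    have hD : 0 ≤ ∫ ω, (ΔL n ω) ^ 2 := integral_nonneg fun ω => sq_nonneg _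
    rw [hsplit n, hsplit (n+1), hv1', hu1', hWsq, hWLint]
    nlinarith [mul_nonneg (mul_nonneg (by linarith : (0:ℝ) ≤ lam - 1) (sq_nonneg τ)) hB,
      mul_nonneg (mul_nonneg (mul_nonneg hlam0.le (by linarith : (0:ℝ) ≤ lam - 1)) (sq_nonneg τ)) hA]
  -- geometric lower bound
  have hgeo : ∀ n, (1 + τ^2)^n * E 0 ≤ E n := by
    intro n
    induction n with
    | zero => simp
    | succ n ih =>
      have h1 : (1 + τ^2) * ((1 + τ^2)^n * E 0) ≤ (1 + τ^2) * E n :=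
        mul_le_mul_of_nonneg_left ih (by positivity)
      calc (1 + τ^2)^(n+1) * E 0 = (1 + τ^2) * ((1 + τ^2)^n * E 0) := by ring
        _ ≤ (1 + τ^2) * E n := h1
        _ ≤ E (n+1) := key n
  -- exp bound
  have hτsq : τ^2 < 1 := by nlinarith
  have hexp : Real.exp (τ^2 / 2) ≤ 1 + τ^2 := by
    have h2 : (0:ℝ) < 1 - τ^2/2 := by nlinarith
    have h4 : Real.exp (τ^2/2) * (1 - τ^2/2) ≤ 1 := by
      have h5 := Real.add_one_le_exp (-(τ^2/2))
      rw [Real.exp_neg] at h5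
      calc Real.exp (τ^2/2) * (1 - τ^2/2)
          ≤ Real.exp (τ^2/2) * (Real.exp (τ^2/2))⁻¹ :=
            mul_le_mul_of_nonneg_left (by linarith) (Real.exp_pos _).le
        _ = 1 := mul_inv_cancel₀ (Real.exp_ne_zero _)
    nlinarith [Real.exp_pos (τ^2/2), h4, h2, hτsq, sq_nonneg τ]
  intro n
  have hpow : Real.exp (τ^2 * n / 2) ≤ (1 + τ^2)^n := by
    have heq : τ^2 * n / 2 = (n:ℝ) * (τ^2/2) := by ring
    rw [heq, Real.exp_nat_mul]
    exact pow_le_pow_left₀ (Real.exp_pos _).le hexp n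
  exact le_trans (mul_le_mul_of_nonneg_right hpow (hEnonneg 0)) (hgeo n)
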